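/- arXiv:1011.3498 — 3 statements merged into one kernel-verified Lean document; each statement's English description precedes it below -/
import Mathlib

section
/- In the random annex code, for any set I of s generation indices and any index j ∉ I, the expected size of the intersection of the union ∪_{i∈I} G_i with G_j equals Ω(s) = g(1 - (1-π)^s) + s h π (1-π)^s, where g = h + l and π = l/((n-1)h). -/
open MeasureTheory ProbabilityTheory Finset

lemma countmem {α : Type*} [DecidableEq α] (t : Finset α) (p : α) (hp : p ∈ t) (l : ℕ) :
    (Finset.filter (fun S : Finset α => p ∈ S ∧ S.card = l ∧ S ⊆ t) t.powerset).card
      = Nat.choose (t.card - 1) (l - 1) * (if l = 0 then 0 else 1) := by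
  rcases Nat.eq_zero_or_pos l with hl | hl
  · subst hl
    simp only [if_true, mul_zero]
    rw [Finset.card_eq_zero, Finset.filter_eq_empty_iff]
    rintro S -
    rintro ⟨hpS, hS0, -⟩
    rw [Finset.card_eq_zero] at hS0
    simp [hS0] at hpS
  · rw [if_neg hl.ne', mul_one]
    rw [← Finset.card_erase_of_mem hp, ← Finset.card_powersetCard (l-1) (t.erase p)]
    refine Finset.card_bij' (fun S _ => S.erase p) (fun T _ => insert p T) ?_ ?_ ?_ ?_
    · intro S hS
      simp only [Finset.mem_filter, Finset.mem_powerset] at hS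
      obtain ⟨-, hpS, hcard, hsub⟩ := hS
      rw [Finset.mem_powersetCard]
      exact ⟨Finset.erase_subset_erase _ hsub, by rw [Finset.card_erase_of_mem hpS, hcard]⟩
    · intro T hT
      rw [Finset.mem_powersetCard] at hT
      obtain ⟨hsub, hcard⟩ := hT
      have hpT : p ∉ T := fun hc => (Finset.mem_erase.1 (hsub hc)).1 rfl
      have hTt : insert p T ⊆ t := Finset.insert_subset hp (hsub.trans (Finset.erase_subset _ _))
      simp only [Finset.mem_filter, Finset.mem_powerset]
      exact ⟨hTt, Finset.mem_insert_self _ _, by rw [Finset.card_insert_of_notMem hpT, hcard, Nat.sub_add_cancel hl], hTt⟩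
    · intro S hS
      simp only [Finset.mem_filter] at hS
      exact Finset.insert_erase hS.2.1
    · intro T hT
      rw [Finset.mem_powersetCard] at hT
      have hpT : p ∉ T := fun hc => (Finset.mem_erase.1 (hT.1 hc)).1 rfl
      exact Finset.erase_insert hpT



/-- in the random annex code, for any set `I` of `s` generation
indices and any `j ∉ I`, the expected size of `(∪_{i∈I} G i) ∩ G j` equals
`Ω(s) = g(1-(1-π)^s) + s h π (1-π)^s` with `g = h + l`, `π = l/((n-1)h)`. -/
theorem stmt16
    (n h l N : ℕ) (hn : 2 ≤ n) (hh : 1 ≤ h) (hN : N = n * h) (hl : l ≤ N - h)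
    (B : Fin n → Finset (Fin N)) (hBcard : ∀ i, (B i).card = h)
    (hBdisj : ∀ i j, i ≠ j → Disjoint (B i) (B j))
    (hBcover : ∀ p : Fin N, ∃ i, p ∈ B i)
    (μ : @Measure (Fin n → Finset (Fin N)) ⊤) (hprob : IsProbabilityMeasure μ)
    (hindep : iIndepFun (m := fun _ : Fin n => (⊤ : MeasurableSpace (Finset (Fin N))))
      (fun i (R : Fin n → Finset (Fin N)) => R i) μ)
    (hunif : ∀ (i : Fin n) (S : Finset (Fin N)),
      μ {R | R i = S}
        = if S.card = l ∧ Disjoint S (B i)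
            then (Nat.choose (N - h) l : ENNReal)⁻¹ else 0)
    (I : Finset (Fin n)) (s : ℕ) (hs : I.card = s) (j : Fin n) (hj : j ∉ I)
    (π : ℝ) (hπ : π = (l : ℝ) / (((n : ℝ) - 1) * h)) :
    (∫ R, (((I.biUnion (fun i => B i ∪ R i)) ∩ (B j ∪ R j)).card : ℝ) ∂μ)
      = ((h : ℝ) + l) * (1 - (1 - π) ^ s) + (s : ℝ) * h * π * (1 - π) ^ s := by
  -- basic numerology
  have hm : N - h = (n - 1) * h := by
    rw [hN, Nat.sub_one_mul]
  have hm1 : 1 ≤ N - h := by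
    rw [hm]; exact Nat.one_le_iff_ne_zero.2 (Nat.mul_ne_zero (by omega) (by omega))
  have hπ' : π = (l : ℝ) / ((N - h : ℕ) : ℝ) := by
    rw [hπ, hm]
    congr 1
    rw [Nat.cast_mul, Nat.cast_sub (by omega : 1 ≤ n)]
    norm_num
  set m := N - h with hmdef
  -- the single-coordinate inclusion probability, in ENNReal
  set πE : ENNReal := (l : ENNReal) / (m : ENNReal) with hπE
  have hπE_le : πE ≤ 1 := by
    rw [hπE, ENNReal.div_le_iff (by exact_mod_cast Nat.one_le_iff_ne_zero.1 hm1)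
      (by exact ENNReal.natCast_ne_top m), one_mul]
    exact_mod_cast hl
  have hπE_ne_top : πE ≠ ⊤ := (lt_of_le_of_lt hπE_le ENNReal.one_lt_top).ne
  have hπE_toReal : πE.toReal = π := by
    rw [hπE, hπ', ENNReal.toReal_div]
    simp
  -- Step 1: μ {R | p ∈ R i} = πE for p ∉ B i
  have step1 : ∀ (i : Fin n) (p : Fin N), p ∉ B i →
      μ ((fun R : Fin n → Finset (Fin N) => R i) ⁻¹' {S | p ∈ S}) = πE := by
    intro i p hp
    classical
    set 𝒯 : Finset (Finset (Fin N)) := Finset.univ.filter (fun S => p ∈ S) with h𝒯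
    have hE : ((fun R : Fin n → Finset (Fin N) => R i) ⁻¹' {S | p ∈ S})
        = ⋃ S ∈ 𝒯, {R : Fin n → Finset (Fin N) | R i = S} := by
      ext R
      simp [h𝒯]
    rw [hE, measure_biUnion_finset]
    · rw [Finset.sum_congr rfl (fun S _ => hunif i S), ← Finset.sum_filter,
        Finset.sum_const]
      have hcardeq : (𝒯.filter (fun S => S.card = l ∧ Disjoint S (B i))).card
          = Nat.choose (m - 1) (l - 1) * (if l = 0 then 0 else 1) := by
        have ht : ((Finset.univ : Finset (Fin N)) \ B i).card = m := by
          rw [Finset.card_sdiff_of_subset (Finset.subset_univ _), Finset.card_univ,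
            Fintype.card_fin, hBcard]
        rw [← ht, ← countmem ((Finset.univ : Finset (Fin N)) \ B i) p
          (by simp [hp]) l]
        congr 1
        ext S
        simp only [h𝒯, Finset.mem_filter, Finset.mem_powerset, Finset.mem_univ,
          true_and, Finset.subset_sdiff, Finset.subset_univ]
        tauto
      rw [hcardeq]
      rcases Nat.eq_zero_or_pos l with hl0 | hl1
      · subst hl0
        simp [hπE]
      · rw [if_neg hl1.ne', mul_one, nsmul_eq_mul, ← div_eq_mul_inv, hπE,
          ENNReal.div_eq_div_iff (by exact_mod_cast Nat.one_le_iff_ne_zero.1 hm1)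
            (ENNReal.natCast_ne_top m)
            (by exact_mod_cast (Nat.choose_pos hl).ne')
            (ENNReal.natCast_ne_top _)]
        have hnat : m * Nat.choose (m - 1) (l - 1) = Nat.choose m l * l := by
          have := Nat.add_one_mul_choose_eq (m - 1) (l - 1)
          have e1 : m - 1 + 1 = m := by omega
          have e2 : l - 1 + 1 = l := by omega
          rwa [e1, e2] at this
        exact_mod_cast hnat
    · intro S hS T hT hST
      rw [Function.onFun, Set.disjoint_left]
      rintro R (hRS : R i = S) (hRT : R i = T)
      exact hST (hRS ▸ hRT ▸ rfl)
    · intro S _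
      exact MeasurableSpace.measurableSet_top
  -- complements
  have step1c : ∀ (i : Fin n) (p : Fin N), p ∉ B i →
      μ ((fun R : Fin n → Finset (Fin N) => R i) ⁻¹' {S | p ∉ S}) = 1 - πE := by
    intro i p hp
    have : ((fun R : Fin n → Finset (Fin N) => R i) ⁻¹' {S | p ∉ S})
        = ((fun R : Fin n → Finset (Fin N) => R i) ⁻¹' {S | p ∈ S})ᶜ := by
      ext R; simp
    rw [this, measure_compl (MeasurableSpace.measurableSet_top) (measure_ne_top μ _),
      measure_univ, step1 i p hp]
  -- Step 2: independence product formula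
  have step2 : ∀ (K : Finset (Fin n)) (A : Fin n → Set (Finset (Fin N))),
      μ (⋂ i ∈ K, (fun R : Fin n → Finset (Fin N) => R i) ⁻¹' A i)
        = ∏ i ∈ K, μ ((fun R : Fin n → Finset (Fin N) => R i) ⁻¹' A i) := by
    intro K A
    exact hindep.meas_biInter (fun i _ => MeasurableSpace.measurableSet_comap.2
      ⟨A i, trivial, rfl⟩)
  -- notation
  classical
  letI : MeasurableSpace (Fin n → Finset (Fin N)) := ⊤
  set Ev : Fin N → Set (Fin n → Finset (Fin N)) :=
    fun p => {R | p ∈ I.biUnion (fun i => B i ∪ R i) ∧ p ∈ B j ∪ R j} with hEv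
  have hq_toReal : ((1 - πE) ^ s).toReal = (1 - π) ^ s := by
    rw [ENNReal.toReal_pow, ENNReal.toReal_sub_of_le hπE_le ENNReal.one_ne_top,
      ENNReal.toReal_one, hπE_toReal]
  -- the exists-event and its measure
  have hA : ∀ p : Fin N, (∀ i ∈ I, p ∉ B i) →
      μ {R : Fin n → Finset (Fin N) | ∃ i ∈ I, p ∈ R i} = 1 - (1 - πE) ^ s ∧
      μ {R : Fin n → Finset (Fin N) | ∃ i ∈ I, p ∈ R i}ᶜ = (1 - πE) ^ s := by
    intro p hp
    have hcompl : {R : Fin n → Finset (Fin N) | ∃ i ∈ I, p ∈ R i}ᶜ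
        = ⋂ i ∈ I, (fun R : Fin n → Finset (Fin N) => R i) ⁻¹' {S | p ∉ S} := by
      ext R
      simp
    have h2 : μ {R : Fin n → Finset (Fin N) | ∃ i ∈ I, p ∈ R i}ᶜ = (1 - πE) ^ s := by
      rw [hcompl, step2, Finset.prod_congr rfl (fun i hi => step1c i p (hp i hi)),
        Finset.prod_const, hs]
    refine ⟨?_, h2⟩
    have h3 := measure_compl (μ := μ) (s := {R : Fin n → Finset (Fin N) | ∃ i ∈ I, p ∈ R i})
      MeasurableSpace.measurableSet_top (measure_ne_top μ _)
    rw [h2, measure_univ] at h3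
    rw [h3]
    exact (ENNReal.sub_sub_cancel ENNReal.one_ne_top prob_le_one).symm
  -- case A : p ∈ B k with k ∈ I
  have caseA : ∀ (k : Fin n), k ∈ I → ∀ p ∈ B k, (μ (Ev p)).toReal = π := by
    intro k hk p hpk
    have hkj : k ≠ j := fun e => hj (e ▸ hk)
    have hpj : p ∉ B j := Finset.disjoint_left.1 (hBdisj k j hkj) hpk
    have hEq : Ev p = (fun R : Fin n → Finset (Fin N) => R j) ⁻¹' {S | p ∈ S} := by
      ext R
      simp only [hEv, Set.mem_setOf_eq, Finset.mem_biUnion, Finset.mem_union,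
        Set.mem_preimage]
      constructor
      · rintro ⟨-, hpj' | hpr⟩
        · exact absurd hpj' hpj
        · exact hpr
      · intro hpr
        exact ⟨⟨k, hk, Or.inl hpk⟩, Or.inr hpr⟩
    rw [hEq, step1 j p hpj, hπE_toReal]
  -- case B : p ∈ B j
  have caseB : ∀ p ∈ B j, (μ (Ev p)).toReal = 1 - (1 - π) ^ s := by
    intro p hpj
    have hpI : ∀ i ∈ I, p ∉ B i := fun i hi =>
      Finset.disjoint_left.1 (hBdisj j i (fun e => hj (e ▸ hi))) hpj
    have hEq : Ev p = {R : Fin n → Finset (Fin N) | ∃ i ∈ I, p ∈ R i} := by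
      ext R
      simp only [hEv, Set.mem_setOf_eq, Finset.mem_biUnion, Finset.mem_union]
      constructor
      · rintro ⟨⟨i, hi, hpi | hpr⟩, -⟩
        · exact absurd hpi (hpI i hi)
        · exact ⟨i, hi, hpr⟩
      · rintro ⟨i, hi, hpr⟩
        exact ⟨⟨i, hi, Or.inr hpr⟩, Or.inl hpj⟩
    rw [hEq, (hA p hpI).1, ENNReal.toReal_sub_of_le
      (pow_le_one' tsub_le_self s) ENNReal.one_ne_top, ENNReal.toReal_one, hq_toReal]
  -- case C : p ∈ B k with k ∉ I, k ≠ j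
  have caseC : ∀ (k : Fin n), k ∉ I → k ≠ j → ∀ p ∈ B k,
      (μ (Ev p)).toReal = π * (1 - (1 - π) ^ s) := by
    intro k hkI hkj p hpk
    have hpj : p ∉ B j := Finset.disjoint_left.1 (hBdisj k j hkj) hpk
    have hpI : ∀ i ∈ I, p ∉ B i := fun i hi =>
      Finset.disjoint_left.1 (hBdisj k i (fun e => hkI (e ▸ hi))) hpk
    set A : Set (Fin n → Finset (Fin N)) := {R | ∃ i ∈ I, p ∈ R i} with hAdef
    set C : Set (Fin n → Finset (Fin N)) :=
      (fun R : Fin n → Finset (Fin N) => R j) ⁻¹' {S | p ∈ S} with hCdef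
    have hEq : Ev p = C ∩ A := by
      ext R
      simp only [hEv, hAdef, hCdef, Set.mem_setOf_eq, Finset.mem_biUnion,
        Finset.mem_union, Set.mem_inter_iff, Set.mem_preimage]
      constructor
      · rintro ⟨⟨i, hi, hpi | hpr⟩, hpj' | hprj⟩ <;>
          first
            | exact absurd hpi (hpI i hi)
            | exact absurd hpj' hpj
            | exact ⟨hprj, i, hi, hpr⟩
      · rintro ⟨hprj, i, hi, hpr⟩
        exact ⟨⟨i, hi, Or.inr hpr⟩, Or.inr hprj⟩
    have hdiff : C \ A = ⋂ i ∈ insert j I,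
        (fun R : Fin n → Finset (Fin N) => R i) ⁻¹'
          (if i = j then {S | p ∈ S} else {S | p ∉ S}) := by
      ext R
      simp only [hAdef, hCdef, Set.mem_diff, Set.mem_preimage, Set.mem_setOf_eq,
        Set.mem_iInter, Finset.mem_insert]
      constructor
      · rintro ⟨hprj, hnA⟩
        rintro i (rfl | hi)
        · simp only [if_pos rfl]; exact hprj
        · have : i ≠ j := fun e => hj (e ▸ hi)
          simp only [if_neg this, Set.mem_setOf_eq]
          exact fun hc => hnA ⟨i, hi, hc⟩
      · intro hall
        have h1 := hall j (Or.inl rfl)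
        simp only [if_pos rfl] at h1
        refine ⟨h1, ?_⟩
        rintro ⟨i, hi, hpi⟩
        have hij : i ≠ j := fun e => hj (e ▸ hi)
        have := hall i (Or.inr hi)
        simp only [if_neg hij, Set.mem_setOf_eq] at this
        exact this hpi
    have hμdiff : μ (C \ A) = πE * (1 - πE) ^ s := by
      rw [hdiff, step2, Finset.prod_insert hj]
      simp only [eq_self_iff_true, if_true]
      rw [step1 j p hpj]
      congr 1
      have hfac : ∀ i ∈ I, μ ((fun R : Fin n → Finset (Fin N) => R i) ⁻¹'
          (if i = j then {S | p ∈ S} else {S | p ∉ S})) = 1 - πE := by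
        intro i hi
        rw [if_neg (show i ≠ j from fun e => hj (e ▸ hi))]
        exact step1c i p (hpI i hi)
      rw [Finset.prod_congr rfl hfac, Finset.prod_const, hs]
    have hadd : μ (C ∩ A) + μ (C \ A) = μ C :=
      measure_inter_add_diff C MeasurableSpace.measurableSet_top
    rw [hμdiff, step1 j p hpj] at hadd
    have hfin1 : μ (C ∩ A) ≠ ⊤ := measure_ne_top μ _
    have := congrArg ENNReal.toReal hadd
    rw [ENNReal.toReal_add hfin1 (by
        exact ENNReal.mul_ne_top hπE_ne_top (by
          exact (lt_of_le_of_lt (pow_le_one' tsub_le_self s) ENNReal.one_lt_top).ne)),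
      ENNReal.toReal_mul, hq_toReal, hπE_toReal] at this
    rw [hEq]
    linarith
  -- integral equals sum of probabilities
  have hint : (∫ R, (((I.biUnion (fun i => B i ∪ R i)) ∩ (B j ∪ R j)).card : ℝ) ∂μ)
      = ∑ p : Fin N, (μ (Ev p)).toReal := by
    have hcardf : ∀ R : Fin n → Finset (Fin N),
        (((I.biUnion (fun i => B i ∪ R i)) ∩ (B j ∪ R j)).card : ℝ)
          = ∑ p : Fin N, Set.indicator (Ev p) (fun _ => (1 : ℝ)) R := by
      intro R
      have hterm : ∀ p : Fin N, Set.indicator (Ev p) (fun _ => (1 : ℝ)) R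
          = if p ∈ (I.biUnion (fun i => B i ∪ R i)) ∩ (B j ∪ R j) then (1 : ℝ) else 0 := by
        intro p
        rw [Set.indicator_apply]
        congr 1
        simp [hEv, Finset.mem_inter]
      rw [Finset.sum_congr rfl (fun p _ => hterm p), Finset.sum_ite_mem,
        Finset.univ_inter, Finset.sum_const, nsmul_eq_mul, mul_one]
    have hfeq : (fun R : Fin n → Finset (Fin N) =>
        (((I.biUnion (fun i => B i ∪ R i)) ∩ (B j ∪ R j)).card : ℝ))
        = fun R => ∑ p : Fin N, Set.indicator (Ev p) (fun _ => (1 : ℝ)) R :=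
      funext hcardf
    rw [hfeq, integral_finset_sum _ (fun p _ =>
      (integrable_const (1 : ℝ)).indicator MeasurableSpace.measurableSet_top)]
    refine Finset.sum_congr rfl (fun p _ => ?_)
    rw [integral_indicator_const (1 : ℝ) MeasurableSpace.measurableSet_top,
      smul_eq_mul, mul_one, Measure.real]
  -- partition the sum over packets by base generation
  have hpart : ∑ p : Fin N, (μ (Ev p)).toReal
      = ∑ k : Fin n, ∑ p ∈ B k, (μ (Ev p)).toReal := by
    have huniv : (Finset.univ : Finset (Fin N)) = (Finset.univ : Finset (Fin n)).biUnion B := by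
      ext p
      simpa using hBcover p
    rw [huniv, Finset.sum_biUnion (fun a _ b _ hab => hBdisj a b hab)]
  -- evaluate the inner sums
  have hg : ∀ k : Fin n, ∑ p ∈ B k, (μ (Ev p)).toReal
      = if k ∈ I then (h : ℝ) * π else if k = j then (h : ℝ) * (1 - (1 - π) ^ s)
          else (h : ℝ) * π * (1 - (1 - π) ^ s) := by
    intro k
    split_ifs with h1 h2
    · rw [Finset.sum_congr rfl (caseA k h1), Finset.sum_const, hBcard, nsmul_eq_mul]
    · subst h2
      rw [Finset.sum_congr rfl caseB, Finset.sum_const, hBcard, nsmul_eq_mul]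
    · rw [Finset.sum_congr rfl (caseC k h1 h2), Finset.sum_const, hBcard, nsmul_eq_mul]
      ring
  -- count and conclude
  have hsn : s + 1 ≤ n := by
    have hins := Finset.card_le_univ (insert j I)
    rw [Finset.card_insert_of_notMem hj, hs] at hins
    simp only [Finset.card_univ, Fintype.card_fin] at hins
    omega
  have hIu : I ⊆ (Finset.univ : Finset (Fin n)) := Finset.subset_univ _
  have hju : {j} ⊆ (Finset.univ : Finset (Fin n)) \ I := by
    intro x hx
    rw [Finset.mem_singleton] at hx
    subst hx
    simp [hj]
  have hsum : ∑ k : Fin n, ∑ p ∈ B k, (μ (Ev p)).toReal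
      = ((n : ℝ) - s - 1) * ((h : ℝ) * π * (1 - (1 - π) ^ s))
        + (h : ℝ) * (1 - (1 - π) ^ s) + (s : ℝ) * ((h : ℝ) * π) := by
    rw [Finset.sum_congr rfl (fun k _ => hg k), ← Finset.sum_sdiff hIu,
      ← Finset.sum_sdiff hju]
    have e1 : ∀ k ∈ ((Finset.univ : Finset (Fin n)) \ I) \ {j},
        (if k ∈ I then (h : ℝ) * π else if k = j then (h : ℝ) * (1 - (1 - π) ^ s)
          else (h : ℝ) * π * (1 - (1 - π) ^ s)) = (h : ℝ) * π * (1 - (1 - π) ^ s) := by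
      intro k hk
      simp only [Finset.mem_sdiff, Finset.mem_singleton, Finset.mem_univ, true_and] at hk
      rw [if_neg hk.1, if_neg hk.2]
    have e2 : ∀ k ∈ ({j} : Finset (Fin n)),
        (if k ∈ I then (h : ℝ) * π else if k = j then (h : ℝ) * (1 - (1 - π) ^ s)
          else (h : ℝ) * π * (1 - (1 - π) ^ s)) = (h : ℝ) * (1 - (1 - π) ^ s) := by
      intro k hk
      rw [Finset.mem_singleton] at hk
      subst hk
      rw [if_neg hj, if_pos rfl]
    have e3 : ∀ k ∈ I,
        (if k ∈ I then (h : ℝ) * π else if k = j then (h : ℝ) * (1 - (1 - π) ^ s)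
          else (h : ℝ) * π * (1 - (1 - π) ^ s)) = (h : ℝ) * π := fun k hk => if_pos hk
    rw [Finset.sum_congr rfl e1, Finset.sum_congr rfl e2, Finset.sum_congr rfl e3,
      Finset.sum_const, Finset.sum_const, Finset.sum_const, hs]
    have hcard1 : (((Finset.univ : Finset (Fin n)) \ I) \ {j}).card = n - s - 1 := by
      rw [Finset.card_sdiff_of_subset hju, Finset.card_sdiff_of_subset hIu, Finset.card_univ,
        Fintype.card_fin, hs, Finset.card_singleton]
    rw [hcard1]
    have hcast : ((n - s - 1 : ℕ) : ℝ) = (n : ℝ) - s - 1 := by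
      rw [Nat.cast_sub (by omega : 1 ≤ n - s), Nat.cast_sub (by omega : s ≤ n),
        Nat.cast_one]
    simp only [nsmul_eq_mul, Finset.card_singleton, Nat.cast_one, one_mul]
    rw [hcast]
  have hlr : (l : ℝ) = π * (((n : ℝ) - 1) * h) := by
    have hd1 : ((n : ℝ) - 1) ≠ 0 := by
      have h2 : (2 : ℝ) ≤ (n : ℝ) := by exact_mod_cast hn
      linarith
    have hd2 : (h : ℝ) ≠ 0 := by
      have : (0 : ℝ) < h := by exact_mod_cast hh
      linarith
    rw [hπ]
    field_simp
  rw [hint, hpart, hsum, hlr]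
  have hgen : ∀ q : ℝ, ((n : ℝ) - s - 1) * ((h : ℝ) * π * (1 - q))
      + (h : ℝ) * (1 - q) + (s : ℝ) * ((h : ℝ) * π)
      = ((h : ℝ) + π * (((n : ℝ) - 1) * h)) * (1 - q) + (s : ℝ) * h * π * q := by
    intro q
    ring
  exact hgen ((1 - π) ^ s)
end

section
/- In the random annex code limit n → ∞ with l/h → α and s/n → β (h fixed), the expected overlap Ω(s) = g(1-(1-π)^s) + shπ(1-π)^s converges to h[1 + α - (1 + α - αβ)e^{-αβ}], where g = h+l and π = l/((n-1)h). -/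
open Filter

private noncomputable def gAux : ℝ → ℝ := fun x => if x = 0 then -1 else Real.log (1 - x) / x

private lemma gAux_tendsto : Tendsto gAux (nhds 0) (nhds (-1)) := by
  have hd : HasDerivAt (fun x : ℝ => Real.log (1 - x)) (-1) 0 := by
    have h1 : HasDerivAt (fun x : ℝ => 1 - x) (0 - 1) 0 :=
      (hasDerivAt_const 0 (1:ℝ)).sub (hasDerivAt_id 0)
    have := h1.log (by norm_num : (1:ℝ) - 0 ≠ 0)
    simpa using this
  have hslope := hasDerivAt_iff_tendsto_slope.mp hd
  have h1 : Tendsto gAux (nhdsWithin (0:ℝ) {(0:ℝ)}ᶜ) (nhds (-1)) := by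
    refine hslope.congr' ?_
    filter_upwards [self_mem_nhdsWithin] with x hx
    have hx0 : x ≠ 0 := hx
    simp [slope, gAux, hx0, Real.log_one, div_eq_inv_mul]
  have h2 : Tendsto gAux (pure (0:ℝ)) (nhds (-1)) := by
    have := tendsto_pure_nhds gAux 0
    simpa [gAux] using this
  have := h1.sup h2
  rwa [nhdsNE_sup_pure] at this

/-- in the random annex code limit `n → ∞` with `l/h → α` and
`s/n → β` (`h` fixed), the expected overlap
`Ω(s) = g(1-(1-π)^s) + s h π (1-π)^s` (with `g = h + l`, `π = l/((n-1)h)`)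
converges to `h[1 + α - (1 + α - α * β)e^{-αβ}]`. -/
theorem stmt17
    (h : ℕ) (hh : 1 ≤ h)
    (l s : ℕ → ℕ) (α β : ℝ) (hα : 0 ≤ α) (hβ : β ∈ Set.Icc (0 : ℝ) 1)
    (hl : Tendsto (fun n : ℕ => (l n : ℝ) / h) atTop (nhds α))
    (hs : Tendsto (fun n : ℕ => (s n : ℝ) / n) atTop (nhds β))
    (π : ℕ → ℝ) (hπ : ∀ n, π n = (l n : ℝ) / (((n : ℝ) - 1) * h))
    (W : ℕ → ℝ)
    (hW : ∀ n, W n = ((h : ℝ) + l n) * (1 - (1 - π n) ^ (s n))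
        + (s n : ℝ) * h * π n * (1 - π n) ^ (s n)) :
    Tendsto W atTop
      (nhds ((h : ℝ) * (1 + α - (1 + α - α * β) * Real.exp (-(α * β))))) := by
  have hh0 : (h : ℝ) ≠ 0 := by positivity
  -- (n-1) → ∞ and 1/(n-1) → 0
  have hn1 : Tendsto (fun n : ℕ => (n : ℝ) - 1) atTop atTop :=
    tendsto_atTop_add_const_right _ (-1) tendsto_natCast_atTop_atTop
  have hinv : Tendsto (fun n : ℕ => ((n : ℝ) - 1)⁻¹) atTop (nhds 0) :=
    hn1.inv_tendsto_atTop
  -- π → 0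
  have hπ0 : Tendsto π atTop (nhds 0) := by
    have h1 : Tendsto (fun n : ℕ => ((l n : ℝ) / h) * ((n : ℝ) - 1)⁻¹) atTop (nhds (α * 0)) :=
      hl.mul hinv
    rw [mul_zero] at h1
    refine h1.congr fun n => ?_
    simp [hπ n, div_eq_mul_inv, mul_inv, mul_comm, mul_assoc, mul_left_comm]
  -- n/(n-1) → 1
  have hquot : Tendsto (fun n : ℕ => (n : ℝ) / ((n : ℝ) - 1)) atTop (nhds 1) := by
    have h1 : Tendsto (fun n : ℕ => 1 + ((n : ℝ) - 1)⁻¹) atTop (nhds (1 + 0)) :=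
      tendsto_const_nhds.add hinv
    rw [add_zero] at h1
    refine h1.congr' ?_
    filter_upwards [eventually_atTop.2 ⟨2, fun n hn => hn⟩] with n hn
    have hn1 : ((n : ℝ) - 1) ≠ 0 := by
      have : (2 : ℝ) ≤ (n : ℝ) := by exact_mod_cast hn
      nlinarith
    field_simp
    ring
  -- s·π → αβ
  have hsπ : Tendsto (fun n : ℕ => (s n : ℝ) * π n) atTop (nhds (α * β)) := by
    have h1 : Tendsto
        (fun n : ℕ => ((s n : ℝ) / n) * ((l n : ℝ) / h) * ((n : ℝ) / ((n : ℝ) - 1)))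
        atTop (nhds (β * α * 1)) := (hs.mul hl).mul hquot
    rw [mul_one, mul_comm β α] at h1
    refine h1.congr' ?_
    filter_upwards [eventually_atTop.2 ⟨2, fun n hn => hn⟩] with n hn
    have hn0 : (n : ℝ) ≠ 0 := by
      have : (2 : ℝ) ≤ (n : ℝ) := by exact_mod_cast hn
      nlinarith
    have hn1 : ((n : ℝ) - 1) ≠ 0 := by
      have : (2 : ℝ) ≤ (n : ℝ) := by exact_mod_cast hn
      nlinarith
    rw [hπ n]
    field_simp
  -- (1-π)^s → exp(-(αβ))
  have hL : Tendsto (fun n : ℕ => (s n : ℝ) * Real.log (1 - π n)) atTop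
      (nhds (α * β * -1)) := by
    have h1 : Tendsto (fun n : ℕ => ((s n : ℝ) * π n) * gAux (π n)) atTop
        (nhds (α * β * -1)) := hsπ.mul (gAux_tendsto.comp hπ0)
    refine h1.congr fun n => ?_
    by_cases hp : π n = 0
    · simp [hp, gAux]
    · simp only [gAux, if_neg hp]
      field_simp
  have hE : Tendsto (fun n : ℕ => (1 - π n) ^ (s n)) atTop
      (nhds (Real.exp (-(α * β)))) := by
    have h1 : Tendsto (fun n : ℕ => Real.exp ((s n : ℝ) * Real.log (1 - π n))) atTop
        (nhds (Real.exp (α * β * -1))) := (Real.continuous_exp.tendsto _).comp hL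
    rw [show α * β * -1 = -(α * β) by ring] at h1
    refine h1.congr' ?_
    have hsmall : ∀ᶠ n : ℕ in atTop, |π n| < 1 := by
      have := hπ0.eventually (eventually_abs_sub_lt 0 (by norm_num : (0:ℝ) < 1))
      simpa using this
    filter_upwards [hsmall] with n hn
    have hpos : 0 < 1 - π n := by
      have := abs_lt.mp hn
      linarith [this.2]
    rw [Real.exp_nat_mul, Real.exp_log hpos]
  -- l → hα
  have hlℝ : Tendsto (fun n : ℕ => (l n : ℝ)) atTop (nhds ((h : ℝ) * α)) := by
    have h1 : Tendsto (fun n : ℕ => (h : ℝ) * ((l n : ℝ) / h)) atTop (nhds ((h : ℝ) * α)) :=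
      hl.const_mul _
    refine h1.congr fun n => ?_
    field_simp
  -- combine
  have hmain : Tendsto
      (fun n : ℕ => ((h : ℝ) + l n) * (1 - (1 - π n) ^ (s n))
        + ((s n : ℝ) * π n) * (h : ℝ) * (1 - π n) ^ (s n)) atTop
      (nhds (((h : ℝ) + (h : ℝ) * α) * (1 - Real.exp (-(α * β)))
        + (α * β) * (h : ℝ) * Real.exp (-(α * β)))) :=
    ((tendsto_const_nhds.add hlℝ).mul (tendsto_const_nhds.sub hE)).add
      ((hsπ.mul tendsto_const_nhds).mul hE)
  have heq : ((h : ℝ) + (h : ℝ) * α) * (1 - Real.exp (-(α * β)))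
      + (α * β) * (h : ℝ) * Real.exp (-(α * β))
      = (h : ℝ) * (1 + α - (1 + α - α * β) * Real.exp (-(α * β))) := by ring
  rw [heq] at hmain
  refine hmain.congr fun n => ?_
  rw [hW n]
  ring
end

section
/- Let M be the number of i.i.d. uniform vectors from GF(q)^g drawn until g linearly independent ones are obtained, and S_m(x) = ∑_{j=0}^{m-1} x^j/j!. Then E[S_M(x)] < S_g(x) + α_{q,g} q^g (e^{x/q} - S_g(x/q)) for every x > 0, where α_{q,g} = -∑_{k=0}^{g-1} ln(1 - q^{k-g}). -/
open MeasureTheory Finset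

/-- Truncated exponential series `S_m(x) = ∑_{j=0}^{m-1} x^j/j!`. -/
noncomputable def truncExp (m : ℕ) (x : ℝ) : ℝ := ∑ j ∈ Finset.range m, x ^ j / (j.factorial : ℝ)

lemma real_exp_tsum (y : ℝ) : Real.exp y = ∑' n : ℕ, y ^ n / n.factorial := by
  rw [Real.exp_eq_exp_ℝ, NormedSpace.exp_eq_tsum_div]

/-- if `M` is the number of i.i.d. uniform vectors in `GF(q)^g`
drawn until `g` linearly independent ones are obtained (so that `P[M > j] = 1`
for `j < g` and `P[M > j] < α_{q,g} q^{-(j-g)}` for `j ≥ g`), then for every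
`x > 0`, `E[S_M(x)] < S_g(x) + α_{q,g} q^g (e^{x/q} - S_g(x/q))`, where
`α_{q,g} = -∑_{k=0}^{g-1} ln(1 - q^{k-g})`. -/
theorem stmt19
    (q g : ℕ) (hq : 2 ≤ q) (hg : 1 ≤ g)
    (Ω : Type*) [MeasurableSpace Ω] (μ : Measure Ω) [IsProbabilityMeasure μ]
    (M : Ω → ℕ) (hMmeas : Measurable M)
    (hMint : Integrable (fun ω => (M ω : ℝ)) μ)
    (α : ℝ) (hα : α = -∑ k ∈ Finset.range g, Real.log (1 - (q : ℝ) ^ ((k : ℤ) - (g : ℤ))))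
    (htail_low : ∀ j : ℕ, j < g → μ {ω | j < M ω} = 1)
    (htail : ∀ j : ℕ, g ≤ j →
      (μ {ω | j < M ω}).toReal < α * (q : ℝ) ^ (-((j : ℤ) - (g : ℤ))))
    (x : ℝ) (hx : 0 < x)
    (hSint : Integrable (fun ω => truncExp (M ω) x) μ) :
    ∫ ω, truncExp (M ω) x ∂μ
      < truncExp g x + α * (q : ℝ) ^ (g : ℕ)
          * (Real.exp (x / q) - truncExp g (x / q)) := by
  have hq0 : (0:ℝ) < q := by positivity
  have hqne : (q:ℝ) ≠ 0 := ne_of_gt hq0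
  -- the coefficient function
  set a : ℕ → ℝ := fun j => x ^ j / (j.factorial : ℝ) with ha
  have ha_pos : ∀ j, 0 < a j := fun j => by
    have : (0:ℝ) < (j.factorial : ℝ) := by positivity
    exact div_pos (pow_pos hx j) this
  have ha_summable : Summable a := Real.summable_pow_div_factorial x
  -- probabilities
  set P : ℕ → ℝ := fun j => (μ {ω | j < M ω}).toReal with hP
  have hP_nonneg : ∀ j, 0 ≤ P j := fun j => ENNReal.toReal_nonneg
  have hP_le_one : ∀ j, P j ≤ 1 := by
    intro j
    have : μ {ω | j < M ω} ≤ 1 := prob_le_one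
    simpa [hP] using ENNReal.toReal_mono (by simp) this
  set c : ℕ → ℝ := fun j => a j * P j with hc
  have hc_nonneg : ∀ j, 0 ≤ c j := fun j => mul_nonneg (le_of_lt (ha_pos j)) (hP_nonneg j)
  have hc_summable : Summable c := by
    apply Summable.of_nonneg_of_le hc_nonneg (fun j => ?_) ha_summable
    calc c j = a j * P j := rfl
    _ ≤ a j * 1 := by
        exact mul_le_mul_of_nonneg_left (hP_le_one j) (le_of_lt (ha_pos j))
    _ = a j := mul_one _
  -- indicator functions
  have hmeas_set : ∀ j : ℕ, MeasurableSet {ω | j < M ω} := by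
    intro j
    exact hMmeas measurableSet_Ioi
  set f : ℕ → Ω → ℝ := fun j => Set.indicator {ω | j < M ω} (fun _ => a j) with hf
  have hf_eq : ∀ ω, truncExp (M ω) x = ∑' j, f j ω := by
    intro ω
    rw [truncExp, eq_comm]
    refine tsum_eq_sum (fun j hj => ?_) |>.trans (Finset.sum_congr rfl (fun j hj => ?_))
    · simp only [Finset.mem_range, not_lt] at hj
      simp [hf, Set.indicator_apply, Nat.not_lt.mpr hj]
    · simp only [Finset.mem_range] at hj
      simp [hf, Set.indicator_apply, hj, ha]
  -- step 1: integral equals tsum of c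
  have hintegral : ∫ ω, truncExp (M ω) x ∂μ = ∑' j, c j := by
    have hfm : ∀ j : ℕ, AEStronglyMeasurable (f j) μ := by
      intro j
      exact (measurable_const.indicator (hmeas_set j)).aestronglyMeasurable
    have hfin : ∑' j : ℕ, ∫⁻ ω, ‖f j ω‖₊ ∂μ ≠ ⊤ := by
      have hb : ∀ j : ℕ, ∫⁻ ω, ‖f j ω‖₊ ∂μ ≤ (‖a j‖₊ : ENNReal) := by
        intro j
        have : ∫⁻ ω, ‖f j ω‖₊ ∂μ = ∫⁻ ω, Set.indicator {ω | j < M ω} (fun _ => (‖a j‖₊ : ENNReal)) ω ∂μ := by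
          apply lintegral_congr
          intro ω
          by_cases h : ω ∈ {ω | j < M ω} <;> simp [hf, Set.indicator_apply, h]
        rw [this, lintegral_indicator (hmeas_set j) _]
        simp only [lintegral_const, Measure.restrict_apply MeasurableSet.univ, Set.univ_inter]
        calc (‖a j‖₊ : ENNReal) * μ {ω | j < M ω} ≤ (‖a j‖₊ : ENNReal) * 1 := by
              exact mul_le_mul_right prob_le_one _
        _ = _ := mul_one _
      refine ne_top_of_le_ne_top ?_ (ENNReal.tsum_le_tsum hb)
      rw [ENNReal.tsum_coe_ne_top_iff_summable]
      rw [← NNReal.summable_coe]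
      simpa [coe_nnnorm] using ha_summable.norm
    have := integral_tsum hfm hfin
    calc ∫ ω, truncExp (M ω) x ∂μ = ∫ ω, ∑' j, f j ω ∂μ := by
          exact integral_congr_ae (Filter.Eventually.of_forall hf_eq)
    _ = ∑' j, ∫ ω, f j ω ∂μ := this
    _ = ∑' j, c j := by
        refine tsum_congr (fun j => ?_)
        rw [hf]
        simp only []
        rw [integral_indicator_const (a j) (hmeas_set j)]
        simp [hc, hP, mul_comm, Measure.real]
  rw [hintegral]
  -- split the tsum at g
  rw [← Summable.sum_add_tsum_nat_add g hc_summable]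
  have hhead : ∑ j ∈ Finset.range g, c j = truncExp g x := by
    rw [truncExp]
    refine Finset.sum_congr rfl (fun j hj => ?_)
    simp only [Finset.mem_range] at hj
    have : P j = 1 := by
      simp [hP, htail_low j hj]
    simp [hc, this, ha]
  rw [hhead]
  -- the dominating sequence
  set t : ℕ → ℝ := fun j => α * (q:ℝ) ^ (g:ℕ) * ((x / q) ^ j / (j.factorial : ℝ)) with ht
  have ht_summable : Summable t := (Real.summable_pow_div_factorial (x / q)).mul_left _
  have hct : ∀ j : ℕ, g ≤ j → c j ≤ t j ∧ (j = g → c j < t j) := by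
    intro j hj
    have hbound := htail j hj
    have key : a j * (α * (q:ℝ) ^ (-((j:ℤ) - (g:ℤ)))) = t j := by
      rw [ht, ha]
      simp only []
      rw [div_pow, neg_sub, zpow_sub₀ hqne]
      rw [zpow_natCast, zpow_natCast]
      field_simp
    constructor
    · calc c j = a j * P j := rfl
      _ ≤ a j * (α * (q:ℝ) ^ (-((j:ℤ) - (g:ℤ)))) :=
          mul_le_mul_of_nonneg_left (le_of_lt hbound) (le_of_lt (ha_pos j))
      _ = t j := key
    · intro _
      calc c j = a j * P j := rfl
      _ < a j * (α * (q:ℝ) ^ (-((j:ℤ) - (g:ℤ)))) :=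
          mul_lt_mul_of_pos_left hbound (ha_pos j)
      _ = t j := key
  have htail_lt : ∑' k : ℕ, c (k + g) < ∑' k : ℕ, t (k + g) := by
    refine Summable.tsum_lt_tsum (i := 0) (fun k => (hct (k + g) (by omega)).1) ?_
      ((hc_summable.comp_injective (fun a b => by omega)))
      ((ht_summable.comp_injective (fun a b => by omega)))
    exact (hct (0 + g) (by omega)).2 (by omega)
  have htail_sum : ∑' k : ℕ, t (k + g)
      = α * (q:ℝ) ^ (g:ℕ) * (Real.exp (x / q) - truncExp g (x / q)) := by
    have hsum2 : Summable (fun j => (x / q) ^ j / (j.factorial : ℝ)) :=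
      Real.summable_pow_div_factorial (x / q)
    have hsplit := Summable.sum_add_tsum_nat_add (f := fun j => (x / q) ^ j / (j.factorial : ℝ)) g hsum2
    have hexp : Real.exp (x / q) = ∑' j : ℕ, (x / q) ^ j / (j.factorial : ℝ) :=
      real_exp_tsum (x / q)
    have : ∑' k : ℕ, (x / q) ^ (k + g) / ((k + g).factorial : ℝ)
        = Real.exp (x / q) - truncExp g (x / q) := by
      rw [hexp, truncExp, ← hsplit]
      ring
    calc ∑' k : ℕ, t (k + g)
        = α * (q:ℝ) ^ (g:ℕ) * ∑' k : ℕ, (x / q) ^ (k + g) / ((k + g).factorial : ℝ) := by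
          rw [tsum_mul_left]
    _ = _ := by rw [this]
  linarith [htail_lt, htail_sum.symm ▸ htail_lt]
end
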